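/- Let ψ be a unit vector in the tensor product of two finite-dimensional complex Hilbert spaces (a matrix-indexed vector with index pairs (a,b), a ranging over Fin d₁ and b over Fin d₂), let ρ = ψψ† be the associated pure-state density matrix, and let ρ₁, ρ₂ be its partial traces over the second and first factor respectively. Then the trace norm of the realignment of ρ satisfies ‖R_ρ‖₁ = (Tr √ρ₁)·(Tr √ρ₂) = (Tr √ρ₁)². In particular, the CCNR negativity of a bipartite pure state equals its Rényi-1/2 entanglement entropy. -/

import Mathlib

open scoped ComplexOrder Matrix

noncomputable section

/-- The trace norm `‖M‖₁ = Tr√(MᴴM)` of a complex matrix. -/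
def traceNorm {m n : Type*} [Fintype m] [Fintype n] [DecidableEq n]
    (M : Matrix m n ℂ) : ℝ :=
  ((Matrix.posSemidef_conjTranspose_mul_self M).1.eigenvectorUnitary.1 *
    Matrix.diagonal (((↑) : ℝ → ℂ) ∘ Real.sqrt ∘ (Matrix.posSemidef_conjTranspose_mul_self M).1.eigenvalues) *
    (star (Matrix.posSemidef_conjTranspose_mul_self M).1.eigenvectorUnitary :
      Matrix n n ℂ)).trace.re

open scoped Classical in
/-- The positive semidefinite square root of a positive semidefinite matrix
(junk value `0` on other matrices). -/
def matSqrt {n : Type*} [Fintype n] [DecidableEq n] (M : Matrix n n ℂ) :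
    Matrix n n ℂ :=
  if h : M.PosSemidef then
    h.1.eigenvectorUnitary.1 * Matrix.diagonal (((↑) : ℝ → ℂ) ∘ Real.sqrt ∘ h.1.eigenvalues) *
      (star h.1.eigenvectorUnitary : Matrix n n ℂ)
  else 0

/-- The partial transpose on the second factor:
`M^{T₂}[(a,b),(c,d)] = M[(a,d),(c,b)]`. -/
def ptranspose {m p R : Type*} (M : Matrix (m × p) (m × p) R) :
    Matrix (m × p) (m × p) R :=
  fun c c' => M (c.1, c'.2) (c'.1, c.2)

/-- The realignment: `R_M[(a,c),(b,d)] = M[(a,b),(c,d)]`. -/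
def realign {m p : Type*} (M : Matrix (m × p) (m × p) ℂ) :
    Matrix (m × m) (p × p) ℂ :=
  fun x y => M (x.1, y.1) (x.2, y.2)

/-- The pure-state density matrix `ρ = ψψ†` of a bipartite state vector `ψ`. -/
def pureDensity {d₁ d₂ : ℕ} (ψ : Fin d₁ × Fin d₂ → ℂ) :
    Matrix (Fin d₁ × Fin d₂) (Fin d₁ × Fin d₂) ℂ :=
  fun i j => ψ i * (starRingEnd ℂ) (ψ j)

/-- The partial trace over the second factor: `ρ₁[a,c] = Σ_b M[(a,b),(c,b)]`. -/
def ptrace2 {d₁ d₂ : ℕ} (M : Matrix (Fin d₁ × Fin d₂) (Fin d₁ × Fin d₂) ℂ) :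
    Matrix (Fin d₁) (Fin d₁) ℂ :=
  fun a c => ∑ b, M (a, b) (c, b)

/-- The partial trace over the first factor: `ρ₂[b,d] = Σ_a M[(a,b),(a,d)]`. -/
def ptrace1 {d₁ d₂ : ℕ} (M : Matrix (Fin d₁ × Fin d₂) (Fin d₁ × Fin d₂) ℂ) :
    Matrix (Fin d₂) (Fin d₂) ℂ :=
  fun b d => ∑ a, M (a, b) (a, d)

end


noncomputable section AuxCCNR
open scoped Kronecker
open Matrix
open scoped MatrixOrder

/-- The positive semidefinite square root (spectral form). -/
def Matrix.PosSemidef.sqrt {n : Type*} [Fintype n] [DecidableEq n] {M : Matrix n n ℂ}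
    (h : M.PosSemidef) : Matrix n n ℂ :=
  h.1.eigenvectorUnitary.1 * Matrix.diagonal (((↑) : ℝ → ℂ) ∘ Real.sqrt ∘ h.1.eigenvalues) *
    (star h.1.eigenvectorUnitary : Matrix n n ℂ)

lemma Matrix.PosSemidef.cfcSqrt_eq {n : Type*} [Fintype n] [DecidableEq n] {M : Matrix n n ℂ}
    (h : M.PosSemidef) : CFC.sqrt M = h.sqrt := by
  rw [CFC.sqrt_eq_cfc, cfc_nnreal_eq_real _ M h.nonneg, h.1.cfc_eq]
  simp only [IsHermitian.cfc, Unitary.conjStarAlgAut_apply]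
  unfold Matrix.PosSemidef.sqrt
  refine congrArg (fun D => _ * D * _) (congrArg diagonal (funext fun i => ?_))
  simp only [Function.comp_apply, Real.coe_sqrt, Real.coe_toNNReal _ (h.eigenvalues_nonneg i)]
  rfl

lemma Matrix.PosSemidef.posSemidef_sqrt {n : Type*} [Fintype n] [DecidableEq n]
    {M : Matrix n n ℂ} (h : M.PosSemidef) : h.sqrt.PosSemidef := by
  rw [← h.cfcSqrt_eq]
  exact nonneg_iff_posSemidef.mp (CFC.sqrt_nonneg M)

lemma Matrix.PosSemidef.sqrt_mul_self {n : Type*} [Fintype n] [DecidableEq n]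
    {M : Matrix n n ℂ} (h : M.PosSemidef) : h.sqrt * h.sqrt = M := by
  rw [← h.cfcSqrt_eq]
  exact CFC.sqrt_mul_sqrt_self M h.nonneg

lemma Matrix.PosSemidef.eq_sqrt_of_sq_eq {n : Type*} [Fintype n] [DecidableEq n]
    {B M : Matrix n n ℂ} (hB : B.PosSemidef) (h : M.PosSemidef) (hsq : B ^ 2 = M) :
    B = h.sqrt := by
  rw [← h.cfcSqrt_eq]
  exact (CFC.sqrt_unique (by rw [← sq]; exact hsq) hB.nonneg).symm

lemma traceNorm_eq_sqrt {m n : Type*} [Fintype m] [Fintype n] [DecidableEq n]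
    (M : Matrix m n ℂ) :
    traceNorm M = ((Matrix.posSemidef_conjTranspose_mul_self M).sqrt).trace.re := rfl

open scoped Classical in
lemma matSqrt_eq {n : Type*} [Fintype n] [DecidableEq n] (M : Matrix n n ℂ) :
    matSqrt M = if h : M.PosSemidef then h.sqrt else 0 := rfl

variable {m n : Type*} [Fintype m] [DecidableEq m] [Fintype n] [DecidableEq n]

private lemma kron_conjTranspose {l p q r : Type*} (A : Matrix l p ℂ) (B : Matrix q r ℂ) :
    (A ⊗ₖ B)ᴴ = Aᴴ ⊗ₖ Bᴴ := by
  ext ⟨i, j⟩ ⟨k, l⟩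
  simp [Matrix.conjTranspose_apply, Matrix.kroneckerMap_apply]

private lemma posSemidef_kron {A : Matrix m m ℂ} {B : Matrix n n ℂ}
    (hA : A.PosSemidef) (hB : B.PosSemidef) : (A ⊗ₖ B).PosSemidef := by
  obtain ⟨C, hC⟩ := CStarAlgebra.nonneg_iff_eq_star_mul_self.mp hA.nonneg
  obtain ⟨D, hD⟩ := CStarAlgebra.nonneg_iff_eq_star_mul_self.mp hB.nonneg
  simp only [star_eq_conjTranspose] at hC hD
  rw [hC, hD, Matrix.mul_kronecker_mul, ← kron_conjTranspose]
  exact Matrix.posSemidef_conjTranspose_mul_self _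

private lemma sqrt_kron {A : Matrix m m ℂ} {B : Matrix n n ℂ}
    (hA : A.PosSemidef) (hB : B.PosSemidef) :
    (posSemidef_kron hA hB).sqrt = hA.sqrt ⊗ₖ hB.sqrt :=
  ((posSemidef_kron hA.posSemidef_sqrt hB.posSemidef_sqrt).eq_sqrt_of_sq_eq
    (posSemidef_kron hA hB)
    (by rw [pow_two, ← Matrix.mul_kronecker_mul, hA.sqrt_mul_self, hB.sqrt_mul_self])).symm

private lemma sqrt_transpose {P : Matrix n n ℂ} (hP : P.PosSemidef) (hPT : (Pᵀ).PosSemidef) :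
    hPT.sqrt = (hP.sqrt)ᵀ :=
  ((hP.posSemidef_sqrt.transpose).eq_sqrt_of_sq_eq hPT
    (by rw [pow_two, ← Matrix.transpose_mul, hP.sqrt_mul_self])).symm

private lemma trace_sqrt_transpose {P : Matrix n n ℂ} (hP : P.PosSemidef)
    (hPT : (Pᵀ).PosSemidef) : hPT.sqrt.trace = hP.sqrt.trace := by
  rw [sqrt_transpose hP hPT, Matrix.trace_transpose]


private lemma unitConj_mul (U : Matrix n n ℂ) (hU : star U * U = 1) (v w : n → ℂ) :
    (U * diagonal v * star U) * (U * diagonal w * star U)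
      = U * diagonal (fun i => v i * w i) * star U := by
  calc (U * diagonal v * star U) * (U * diagonal w * star U)
      = U * (diagonal v * ((star U * U) * (diagonal w * star U))) := by
        simp only [Matrix.mul_assoc]
    _ = U * diagonal (fun i => v i * w i) * star U := by
        rw [hU, Matrix.one_mul, ← Matrix.mul_assoc, ← Matrix.mul_assoc,
          Matrix.mul_assoc U, Matrix.diagonal_mul_diagonal]

private lemma unitConj_trace (U : Matrix n n ℂ) (hU : star U * U = 1) (v : n → ℂ) :
    (U * diagonal v * star U).trace = ∑ i, v i := by
  rw [Matrix.trace_mul_cycle, hU, Matrix.one_mul, Matrix.trace_diagonal]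

private lemma key (A : Matrix m n ℂ) (U : Matrix n n ℂ)
    (hUU : star U * U = 1) (hUU' : U * star U = 1) (d : n → ℝ) (hd : ∀ i, 0 ≤ d i)
    (hspec : Aᴴ * A = U * diagonal (fun i => ((d i : ℝ) : ℂ)) * star U) :
    (Matrix.posSemidef_self_mul_conjTranspose A).sqrt.trace
      = ∑ i, ((Real.sqrt (d i) : ℝ) : ℂ) := by
  classical
  have hcancel : ∀ (p : Type) [Fintype p] (X : Matrix n m ℂ),
      star U * (U * X) = X := by
    intro p _ X
    rw [← Matrix.mul_assoc, hUU, Matrix.one_mul]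
  set g : n → ℝ := fun i => if d i = 0 then 0 else (Real.sqrt (d i))⁻¹ with hgdef
  have hg0 : ∀ i, 0 ≤ g i := fun i => by
    by_cases h : d i = 0 <;>
      simp [hgdef, h, Real.sqrt_nonneg, inv_nonneg.mpr (Real.sqrt_nonneg _)]
  set C : Matrix n n ℂ := U * diagonal (fun i => ((g i : ℝ) : ℂ)) * star U with hCdef
  set S : Matrix m m ℂ := A * C * Aᴴ with hSdef
  -- S is PSD
  have hss : diagonal (fun i => ((Real.sqrt (g i) : ℝ) : ℂ)) *
      diagonal (fun i => ((Real.sqrt (g i) : ℝ) : ℂ)) = diagonal (fun i => ((g i : ℝ) : ℂ)) := by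
    rw [Matrix.diagonal_mul_diagonal]
    refine congrArg diagonal (funext fun i => ?_)
    rw [← Complex.ofReal_mul, Real.mul_self_sqrt (hg0 i)]
  have hSpsd : S.PosSemidef := by
    have hstar : (star fun i => ((Real.sqrt (g i) : ℝ) : ℂ))
        = fun i => ((Real.sqrt (g i) : ℝ) : ℂ) := by
      funext i; simp [Complex.conj_ofReal]
    have hrw : S = (A * U * diagonal (fun i => ((Real.sqrt (g i) : ℝ) : ℂ)))
        * (A * U * diagonal (fun i => ((Real.sqrt (g i) : ℝ) : ℂ)))ᴴ := by
      rw [hSdef, hCdef]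
      simp only [Matrix.conjTranspose_mul, Matrix.diagonal_conjTranspose, hstar,
        Matrix.star_eq_conjTranspose, Matrix.mul_assoc]
      rw [← Matrix.mul_assoc (diagonal fun i => ((Real.sqrt (g i) : ℝ) : ℂ))
        (diagonal fun i => ((Real.sqrt (g i) : ℝ) : ℂ)), hss]
    rw [hrw]
    exact Matrix.posSemidef_self_mul_conjTranspose _
  -- the annihilator
  have hN : A * (U * diagonal (fun i => (if d i = 0 then (1:ℂ) else 0))) = 0 := by
    rw [← Matrix.conjTranspose_mul_self_eq_zero]
    have hstar : (star fun i => (if d i = 0 then (1:ℂ) else 0))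
        = fun i => (if d i = 0 then (1:ℂ) else 0) := by
      funext i; by_cases h : d i = 0 <;> simp [h]
    have hexp : (A * (U * diagonal (fun i => (if d i = 0 then (1:ℂ) else 0))))ᴴ *
        (A * (U * diagonal (fun i => (if d i = 0 then (1:ℂ) else 0))))
        = diagonal (fun i => (if d i = 0 then (1:ℂ) else 0)) *
            (star U * ((Aᴴ * A) * (U * diagonal (fun i => (if d i = 0 then (1:ℂ) else 0))))) := by
      rw [Matrix.conjTranspose_mul, Matrix.conjTranspose_mul, Matrix.diagonal_conjTranspose,
        hstar]
      simp only [Matrix.star_eq_conjTranspose, Matrix.mul_assoc]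
    rw [hexp, hspec]
    simp only [Matrix.mul_assoc]
    rw [show star U * (U * (diagonal (fun i => ((d i : ℝ) : ℂ)) *
        (star U * (U * diagonal (fun i => (if d i = 0 then (1:ℂ) else 0))))))
        = diagonal (fun i => ((d i : ℝ) : ℂ)) *
            (star U * (U * diagonal (fun i => (if d i = 0 then (1:ℂ) else 0)))) from by
      rw [← Matrix.mul_assoc, hUU, Matrix.one_mul]]
    rw [show star U * (U * diagonal (fun i => (if d i = 0 then (1:ℂ) else 0)))
        = diagonal (fun i => (if d i = 0 then (1:ℂ) else 0)) from by
      rw [← Matrix.mul_assoc, hUU, Matrix.one_mul]]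
    rw [Matrix.diagonal_mul_diagonal, Matrix.diagonal_mul_diagonal]
    refine (congrArg diagonal (funext fun i => ?_)).trans Matrix.diagonal_zero
    by_cases h : d i = 0 <;> simp [h]
  -- S squared is A * Aᴴ
  have hS2 : S ^ 2 = A * Aᴴ := by
    have h1 : S * S = A * ((C * (Aᴴ * A)) * C) * Aᴴ := by
      rw [hSdef]; simp only [Matrix.mul_assoc]
    have h2 : (C * (Aᴴ * A)) * C
        = U * diagonal (fun i => (if d i = 0 then (0:ℂ) else 1)) * star U := by
      rw [hspec, hCdef, unitConj_mul U hUU, unitConj_mul U hUU]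
      refine congrArg (fun v => U * diagonal v * star U) (funext fun i => ?_)
      show ((g i : ℝ) : ℂ) * ((d i : ℝ) : ℂ) * ((g i : ℝ) : ℂ) = if d i = 0 then (0:ℂ) else 1
      by_cases h : d i = 0
      · simp [hgdef, h]
      · have hsq : Real.sqrt (d i) * Real.sqrt (d i) = d i := Real.mul_self_sqrt (hd i)
        have hs0 : Real.sqrt (d i) ≠ 0 := by
          intro h0; rw [h0, mul_zero] at hsq; exact h hsq.symm
        simp only [hgdef, h, if_false]
        rw [← Complex.ofReal_mul, ← Complex.ofReal_mul]
        norm_cast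
        field_simp
        rw [Real.sq_sqrt (hd i)]
    have h3 : (fun i => (if d i = 0 then (0:ℂ) else 1))
        = fun i => 1 - (if d i = 0 then (1:ℂ) else 0) := by
      funext i; by_cases h : d i = 0 <;> simp [h]
    have h4 : diagonal (fun i => 1 - (if d i = 0 then (1:ℂ) else 0))
        = 1 - diagonal (fun i => (if d i = 0 then (1:ℂ) else 0)) := by
      rw [← Matrix.diagonal_one, ← Matrix.diagonal_sub]
    have h5 : A * (U * diagonal (fun i => (if d i = 0 then (1:ℂ) else 0)) * star U) * Aᴴ
        = 0 := by
      rw [show U * diagonal (fun i => (if d i = 0 then (1:ℂ) else 0)) * star U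
          = (U * diagonal (fun i => (if d i = 0 then (1:ℂ) else 0))) * star U from rfl,
        ← Matrix.mul_assoc, hN, Matrix.zero_mul, Matrix.zero_mul]
    rw [pow_two, h1, h2, h3, h4, Matrix.mul_sub, Matrix.sub_mul, Matrix.mul_one, hUU',
      Matrix.mul_sub, Matrix.sub_mul, Matrix.mul_one]
    rw [h5, sub_zero]
  -- conclude
  rw [← (hSpsd.eq_sqrt_of_sq_eq (Matrix.posSemidef_self_mul_conjTranspose A) hS2)]
  rw [hSdef, Matrix.trace_mul_cycle, hspec, hCdef, unitConj_mul U hUU, unitConj_trace U hUU]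
  refine Finset.sum_congr rfl fun i _ => ?_
  show ((d i : ℝ) : ℂ) * ((g i : ℝ) : ℂ) = ((Real.sqrt (d i) : ℝ) : ℂ)
  by_cases h : d i = 0
  · simp [hgdef, h]
  · have hsq : Real.sqrt (d i) * Real.sqrt (d i) = d i := Real.mul_self_sqrt (hd i)
    have hs0 : Real.sqrt (d i) ≠ 0 := by
      intro h0; rw [h0, mul_zero] at hsq; exact h hsq.symm
    simp only [hgdef, h, if_false]
    rw [← Complex.ofReal_mul]
    norm_cast
    field_simp
    rw [Real.sq_sqrt (hd i)]


private lemma sqrt_congr {M₁ M₂ : Matrix n n ℂ} (h : M₁ = M₂) (h₁ : M₁.PosSemidef)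
    (h₂ : M₂.PosSemidef) : h₁.sqrt = h₂.sqrt := by subst h; rfl

private lemma trace_sqrt_eq (A : Matrix m n ℂ) :
    (Matrix.posSemidef_self_mul_conjTranspose A).sqrt.trace =
      (Matrix.posSemidef_conjTranspose_mul_self A).sqrt.trace := by
  have hP := Matrix.posSemidef_conjTranspose_mul_self A
  have hUU : star (hP.1.eigenvectorUnitary : Matrix n n ℂ) *
      (hP.1.eigenvectorUnitary : Matrix n n ℂ) = 1 :=
    Matrix.mem_unitaryGroup_iff'.mp hP.1.eigenvectorUnitary.2
  have hUU' : (hP.1.eigenvectorUnitary : Matrix n n ℂ) *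
      star (hP.1.eigenvectorUnitary : Matrix n n ℂ) = 1 :=
    Matrix.mem_unitaryGroup_iff.mp hP.1.eigenvectorUnitary.2
  have h1 := key A hP.1.eigenvectorUnitary hUU hUU' hP.1.eigenvalues hP.eigenvalues_nonneg
    hP.1.spectral_theorem
  rw [h1]
  rw [show (Matrix.posSemidef_conjTranspose_mul_self A).sqrt
      = (hP.1.eigenvectorUnitary : Matrix n n ℂ) *
        Matrix.diagonal (fun i => ((Real.sqrt (hP.1.eigenvalues i) : ℝ) : ℂ)) *
        star (hP.1.eigenvectorUnitary : Matrix n n ℂ) from rfl,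
    unitConj_trace _ hUU]

end AuxCCNR

open scoped Kronecker
open Matrix

/-- For a bipartite pure state `ρ = ψψ†`, the trace norm of the realignment satisfies
`‖R_ρ‖₁ = (Tr √ρ₁)·(Tr √ρ₂) = (Tr √ρ₁)²`: the CCNR negativity of a pure state is its
Rényi-1/2 entanglement entropy. -/
theorem traceNorm_realign_pure {d₁ d₂ : ℕ} (ψ : Fin d₁ × Fin d₂ → ℂ)
    (hψ : ∑ i, Complex.normSq (ψ i) = 1) :
    (traceNorm (realign (pureDensity ψ)) : ℂ) =
      (matSqrt (ptrace2 (pureDensity ψ))).trace *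
        (matSqrt (ptrace1 (pureDensity ψ))).trace ∧
    (traceNorm (realign (pureDensity ψ)) : ℂ) =
      (matSqrt (ptrace2 (pureDensity ψ))).trace ^ 2 := by
  classical
  set A : Matrix (Fin d₁) (Fin d₂) ℂ := fun a b => ψ (a, b) with hAdef
  set B : Matrix (Fin d₁) (Fin d₂) ℂ := A.map (starRingEnd ℂ) with hBdef
  have hrealign : realign (pureDensity ψ) = A ⊗ₖ B := by
    ext ⟨a, c⟩ ⟨b, e⟩
    simp [realign, pureDensity, Matrix.kroneckerMap_apply, Matrix.map_apply, hAdef, hBdef]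
    rfl
  have h2 : ptrace2 (pureDensity ψ) = A * Aᴴ := by
    ext a c
    simp [ptrace2, pureDensity, Matrix.mul_apply, Matrix.conjTranspose_apply, hAdef]
    rfl
  have h1 : ptrace1 (pureDensity ψ) = (Aᴴ * A)ᵀ := by
    ext b e
    simp [ptrace1, pureDensity, Matrix.mul_apply, Matrix.conjTranspose_apply,
      Matrix.transpose_apply, hAdef, mul_comm]
    refine (Finset.sum_congr rfl fun _ _ => mul_comm _ _).trans ?_
    rfl
  have hBB : Bᴴ * B = (Aᴴ * A)ᵀ := by
    ext b e
    simp [Matrix.mul_apply, Matrix.conjTranspose_apply, Matrix.map_apply,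
      Matrix.transpose_apply, hBdef, mul_comm]
  have hPT : ((Aᴴ * A)ᵀ).PosSemidef := (Matrix.posSemidef_conjTranspose_mul_self A).transpose
  have hQ : (Bᴴ * B).PosSemidef := Matrix.posSemidef_conjTranspose_mul_self B
  set t : ℂ := (Matrix.posSemidef_conjTranspose_mul_self A).sqrt.trace with htdef
  have hBt : (Matrix.posSemidef_conjTranspose_mul_self B).sqrt.trace = t := by
    rw [sqrt_congr hBB hQ hPT, trace_sqrt_transpose (Matrix.posSemidef_conjTranspose_mul_self A)
      hPT]
  have hM : (realign (pureDensity ψ))ᴴ * realign (pureDensity ψ) = (Aᴴ * A) ⊗ₖ (Bᴴ * B) := by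
    rw [hrealign, kron_conjTranspose, ← Matrix.mul_kronecker_mul]
  have htr : (Matrix.posSemidef_conjTranspose_mul_self
      (realign (pureDensity ψ))).sqrt.trace = t * t := by
    rw [sqrt_congr hM (Matrix.posSemidef_conjTranspose_mul_self _)
        (posSemidef_kron (Matrix.posSemidef_conjTranspose_mul_self A) hQ),
      sqrt_kron (Matrix.posSemidef_conjTranspose_mul_self A) hQ, Matrix.trace_kronecker, hBt]
  have hstar : (starRingEnd ℂ) t = t := by
    have hct := Matrix.trace_conjTranspose (Matrix.posSemidef_conjTranspose_mul_self A).sqrt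
    rw [(Matrix.posSemidef_conjTranspose_mul_self A).posSemidef_sqrt.1] at hct
    exact hct.symm
  have hre : ((t.re : ℝ) : ℂ) = t := Complex.conj_eq_iff_re.mp hstar
  have htn : (traceNorm (realign (pureDensity ψ)) : ℂ) = t * t := by
    rw [traceNorm_eq_sqrt]
    rw [htr, ← hre]
    norm_cast
  have hp2 : (ptrace2 (pureDensity ψ)).PosSemidef :=
    h2 ▸ Matrix.posSemidef_self_mul_conjTranspose A
  have e2 : (matSqrt (ptrace2 (pureDensity ψ))).trace = t := by
    rw [matSqrt_eq]
    rw [dif_pos hp2, sqrt_congr h2 hp2 (Matrix.posSemidef_self_mul_conjTranspose A),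
      trace_sqrt_eq, htdef]
  have hp1 : (ptrace1 (pureDensity ψ)).PosSemidef := h1 ▸ hPT
  have e1 : (matSqrt (ptrace1 (pureDensity ψ))).trace = t := by
    rw [matSqrt_eq]
    rw [dif_pos hp1, sqrt_congr h1 hp1 hPT,
      trace_sqrt_transpose (Matrix.posSemidef_conjTranspose_mul_self A) hPT, htdef]
  exact ⟨by rw [htn, e2, e1], by rw [htn, e2, sq]⟩
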